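/- Let F_n^1 be the filiform Leibniz algebra ([e_1,e_1]=e_3, [e_i,e_1]=e_{i+1} for 2 ≤ i ≤ n−1). If (d,D) is a biderivation of F_n^1, then writing D(e_1) = Σ β_j e_j and D(e_2) = β_{n+1}e_1 − β_{n+1}e_2 + β_{n+2}e_n, one necessarily has β_1 equal to the coefficient α_1 of e_1 in d(e_1), and β_{n+1} = 0. -/
import Mathlib


def F1br (n : ℕ) (x y : Fin n → ℂ) : Fin n → ℂ := fun i =>
  if h2 : (i : ℕ) = 2 then
    y ⟨0, by have := i.isLt; omega⟩ *
      (x ⟨0, by have := i.isLt; omega⟩ + x ⟨1, by have := i.isLt; omega⟩)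
  else if h3 : 3 ≤ (i : ℕ) then
    y ⟨0, by have := i.isLt; omega⟩ * x ⟨(i : ℕ) - 1, by have := i.isLt; omega⟩
  else 0

/-- for a biderivation `(d,D)` of `F_n^1`, the `e_1`-coefficient
`β₁` of `D(e_1)` equals the `e_1`-coefficient `α₁` of `d(e_1)`, and the
parameter `β_{n+1}` (the `e_1`-coefficient of `D(e_2)`) vanishes. -/
theorem F1_biderivation_constraints (n : ℕ) (hn : 3 ≤ n)
    (d D : (Fin n → ℂ) →ₗ[ℂ] (Fin n → ℂ))
    (hd : ∀ x y, d (F1br n x y) = F1br n (d x) y + F1br n x (d y))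
    (hD : ∀ x y, D (F1br n x y) = F1br n (D x) y - F1br n (D y) x)
    (hc : ∀ x y, F1br n x (d y) = F1br n x (D y)) :
    D (Pi.single ⟨0, by omega⟩ 1) ⟨0, by omega⟩ =
      d (Pi.single ⟨0, by omega⟩ 1) ⟨0, by omega⟩ ∧
    D (Pi.single ⟨1, by omega⟩ 1) ⟨0, by omega⟩ = 0 := by
  have h2n : (2:ℕ) < n := by omega
  have h0n : (0:ℕ) < n := by omega
  have h1n : (1:ℕ) < n := by omega
  set e1 : Fin n → ℂ := Pi.single ⟨0, h0n⟩ 1 with he1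
  set e2 : Fin n → ℂ := Pi.single ⟨1, h1n⟩ 1 with he2
  have he10 : e1 ⟨0, h0n⟩ = 1 := Pi.single_eq_same _ _
  have he11 : e1 ⟨1, h1n⟩ = 0 := by
    rw [he1, Pi.single_eq_of_ne]; simp [Fin.ext_iff]
  have he20 : e2 ⟨0, h0n⟩ = 0 := by
    rw [he2, Pi.single_eq_of_ne]; simp [Fin.ext_iff]
  -- F1br e1 z at index 2 equals z 0
  have hA : ∀ z : Fin n → ℂ, F1br n e1 z ⟨2, h2n⟩ = z ⟨0, h0n⟩ := by
    intro z
    show (if h2 : ((⟨2, h2n⟩ : Fin n) : ℕ) = 2 then _ else _) = _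
    rw [dif_pos rfl]
    show z ⟨0, h0n⟩ * (e1 ⟨0, h0n⟩ + e1 ⟨1, h1n⟩) = z ⟨0, h0n⟩
    rw [he10, he11]; ring
  -- brackets with e2 on the right vanish
  have hB : ∀ x : Fin n → ℂ, F1br n x e2 = 0 := by
    intro x
    funext i
    show (if h2 : (i : ℕ) = 2 then
        e2 ⟨0, by have := i.isLt; omega⟩ * (x _ + x _)
      else if h3 : 3 ≤ (i : ℕ) then e2 ⟨0, by have := i.isLt; omega⟩ * x _ else 0) = 0
    have : e2 (⟨0, by have := i.isLt; omega⟩ : Fin n) = 0 := he20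
    split_ifs <;> simp [this]
  constructor
  · -- β₁ = α₁
    have h := congrFun (hc e1 e1) ⟨2, h2n⟩
    rw [hA, hA] at h
    exact h.symm
  · -- β_{n+1} = 0
    have hde2 : d (e2 : Fin n → ℂ) ⟨0, h0n⟩ = 0 := by
      have h := hd e1 e2
      rw [hB, hB, map_zero, zero_add] at h
      have h2 := congrFun h.symm ⟨2, h2n⟩
      rwa [hA] at h2
    have h := congrFun (hc e1 e2) ⟨2, h2n⟩
    rw [hA, hA] at h
    rw [← h, hde2]
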